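/- Let q, a1, a2 be integers with q ≥ 1 and gcd(a1, a2, q) = 1, and define the quadratic Gauss sum V(q, a1, a2) = Σ_{r=1}^{q} e((a2 r^2 + a1 r)/q). Then |V(q, a1, a2)| ≪ q^{1/2} with an absolute implied constant. -/

import Mathlib

open Finset Complex

noncomputable def psi (q : ℕ) (x : ℤ) : ℂ := Complex.exp (2 * Real.pi * Complex.I * (x / q))

lemma psi_add (q : ℕ) (x y : ℤ) : psi q (x + y) = psi q x * psi q y := by
  rw [psi, psi, psi, ← Complex.exp_add]
  push_cast
  ring_nf

lemma psi_q_mul (q : ℕ) (hq : q ≠ 0) (t : ℤ) : psi q ((q : ℤ) * t) = 1 := by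
  have hq' : (q : ℂ) ≠ 0 := Nat.cast_ne_zero.mpr hq
  rw [psi]
  have : (2 * (Real.pi : ℂ) * Complex.I * (((q : ℤ) * t : ℤ) / q)) = t * (2 * Real.pi * Complex.I) := by
    push_cast
    field_simp
  rw [this, Complex.exp_int_mul_two_pi_mul_I]

lemma psi_periodic (q : ℕ) (hq : q ≠ 0) (x : ℤ) : psi q (x + q) = psi q x := by
  rw [psi_add, show ((q:ℤ)) = (q:ℤ) * 1 by ring, psi_q_mul q hq, mul_one]

lemma abs_psi (q : ℕ) (x : ℤ) : ‖psi q x‖ = 1 := by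
  rw [psi]
  have : (2 * (Real.pi : ℂ) * Complex.I * (x / q)) = ((2 * Real.pi * (x / q) : ℝ) : ℂ) * Complex.I := by
    push_cast; ring
  rw [this, Complex.norm_exp_ofReal_mul_I]

lemma conj_psi (q : ℕ) (x : ℤ) : (starRingEnd ℂ) (psi q x) = psi q (-x) := by
  rw [psi, psi, ← Complex.exp_conj]
  congr 1
  simp only [map_mul, map_div₀, Complex.conj_I, Complex.conj_ofReal, map_ofNat,
    map_intCast, map_natCast]
  push_cast
  ring

lemma psi_eq_one_iff (q : ℕ) (hq : q ≠ 0) (c : ℤ) : psi q c = 1 ↔ (q : ℤ) ∣ c := by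
  have hq' : (q : ℂ) ≠ 0 := Nat.cast_ne_zero.mpr hq
  rw [psi, Complex.exp_eq_one_iff]
  constructor
  · rintro ⟨n, hn⟩
    refine ⟨n, ?_⟩
    have h2 : ((c : ℂ) / q) * (2 * Real.pi * Complex.I) = n * (2 * Real.pi * Complex.I) := by
      rw [← hn]; ring
    have h3 : (c : ℂ) / q = n := mul_right_cancel₀ Complex.two_pi_I_ne_zero h2
    have h4 : (c : ℂ) = (q : ℂ) * n := by field_simp at h3; linear_combination h3
    exact_mod_cast h4
  · rintro ⟨n, hn⟩
    refine ⟨n, ?_⟩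
    subst hn
    push_cast
    field_simp

lemma psi_mul_nat (q : ℕ) (c : ℤ) (k : ℕ) : psi q (c * k) = psi q c ^ k := by
  induction k with
  | zero => simp [psi]
  | succ k ih => push_cast; rw [mul_add, psi_add, ih, mul_one, pow_succ]

lemma psi_geom (q : ℕ) (hq : q ≠ 0) (c : ℤ) :
    ∑ r ∈ range q, psi q (c * r) = if (q : ℤ) ∣ c then (q : ℂ) else 0 := by
  have : ∀ r : ℕ, psi q (c * r) = psi q c ^ r := fun r => psi_mul_nat q c r
  simp_rw [this]
  by_cases h : (q : ℤ) ∣ c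
  · rw [if_pos h, (psi_eq_one_iff q hq c).mpr h]
    simp
  · rw [if_neg h]
    have hne : psi q c ≠ 1 := fun hc => h ((psi_eq_one_iff q hq c).mp hc)
    rw [geom_sum_eq hne]
    have : psi q c ^ q = 1 := by
      rw [← psi_mul_nat, mul_comm, psi_q_mul q hq]
    rw [this]
    simp

section
variable (q : ℕ) (f : ℤ → ℂ)

lemma shift_one (hper : ∀ x : ℤ, f (x + q) = f x) :
    ∑ r ∈ range q, f ((r : ℤ) + 1) = ∑ r ∈ range q, f (r : ℤ) := by
  have h1 : ∑ r ∈ range (q + 1), f (r : ℤ) = (∑ r ∈ range q, f ((r : ℤ) + 1)) + f 0 := by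
    rw [Finset.sum_range_succ' (fun n : ℕ => f (n : ℤ)) q]
    congr 1
  have h2 : ∑ r ∈ range (q + 1), f (r : ℤ) = (∑ r ∈ range q, f (r : ℤ)) + f (q : ℤ) := by
    rw [Finset.sum_range_succ]
  have h3 : f (q : ℤ) = f 0 := by
    have := hper 0
    rwa [zero_add] at this
  rw [h3] at h2
  have := h1.symm.trans h2
  exact add_right_cancel this

lemma shift_nat (hper : ∀ x : ℤ, f (x + q) = f x) (c : ℕ) :
    ∑ r ∈ range q, f ((r : ℤ) + c) = ∑ r ∈ range q, f (r : ℤ) := by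
  induction c with
  | zero => simp
  | succ c ih =>
    have := shift_one q (fun x => f (x + c)) (fun x => by
      show f (x + q + c) = f (x + c)
      have h : x + (q:ℤ) + c = x + c + q := by ring
      rw [h, hper])
    rw [← ih, ← this]
    apply Finset.sum_congr rfl
    intro r _
    congr 1
    push_cast
    ring

end
lemma normSq_V (q : ℕ) (hq : q ≠ 0) (a1 a2 : ℤ) :
    (Complex.normSq (∑ r ∈ range q, psi q (a2 * r ^ 2 + a1 * r)) : ℂ)
      = ∑ r ∈ range q, psi q (a2 * r ^ 2 + a1 * r) *
          (if (q : ℤ) ∣ 2 * a2 * r then (q : ℂ) else 0) := by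
  set P : ℤ → ℤ := fun x => a2 * x ^ 2 + a1 * x with hP
  rw [Complex.normSq_eq_conj_mul_self, map_sum]
  have hconj : ∀ r : ℕ, (starRingEnd ℂ) (psi q (P r)) = psi q (-(P r)) :=
    fun r => conj_psi q _
  rw [Finset.sum_congr rfl (fun r _ => hconj r)]
  rw [Finset.sum_mul_sum]
  have hinner : ∀ s ∈ range q, (∑ r ∈ range q, psi q (-(P s)) * psi q (P r))
      = ∑ r ∈ range q, psi q (a2 * r ^ 2 + a1 * r) * psi q ((2 * a2 * r) * s) := by
    intro s _
    have hterm : ∀ r : ℕ, psi q (-(P s)) * psi q (P r) = psi q (P r - P s) := by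
      intro r
      rw [← psi_add]
      congr 1
      ring
    simp_rw [hterm]
    have hper : ∀ x : ℤ, psi q (P (x + q) - P s) = psi q (P x - P s) := by
      intro x
      have : P (x + q) - P s = (P x - P s) + (q : ℤ) * (2 * a2 * x + a2 * q + a1) := by
        simp only [hP]; ring
      rw [this, psi_add, psi_q_mul q hq, mul_one]
    have := (shift_nat q (fun x => psi q (P x - P s)) hper s).symm
    rw [this]
    apply Finset.sum_congr rfl
    intro r _
    have : P ((r : ℤ) + s) - P s = (a2 * r ^ 2 + a1 * r) + (2 * a2 * r) * s := by
      simp only [hP]; ring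
    rw [this, psi_add]
  rw [Finset.sum_congr rfl hinner, Finset.sum_comm]
  apply Finset.sum_congr rfl
  intro r _
  rw [← Finset.mul_sum]
  congr 1
  have : ∀ s : ℕ, psi q ((2 * a2 * r) * s) = psi q ((2 * a2 * r) * (s : ℤ)) := fun s => rfl
  exact psi_geom q hq (2 * a2 * r)

lemma lemA (w : ℂ) (D : ℕ) (hw : ‖w‖ = 1)
    (hpm : w ^ D = 1 ∨ w ^ D = -1) (h1 : w = 1 → D ≤ 2) :
    (∑ k ∈ range D, w ^ k).re ≤ 2 := by
  by_cases hw1 : w = 1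
  · subst hw1
    simp only [one_pow, Finset.sum_const, Finset.card_range, nsmul_eq_mul, mul_one]
    rw [Complex.natCast_re]
    exact_mod_cast h1 rfl
  · rw [geom_sum_eq hw1]
    have hns : Complex.normSq w = 1 := by
      rw [← Complex.sq_norm, hw]; norm_num
    have hrelt : w.re < 1 := by
      rcases lt_or_eq_of_le (Complex.re_le_norm w) with h | h
      · rwa [hw] at h
      · exfalso
        apply hw1
        have him : w.im = 0 := by
          have := hns
          rw [Complex.normSq_apply] at this
          nlinarith [Complex.re_le_norm w, hw]
        have hre : w.re = 1 := by rw [h, hw]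
        apply Complex.ext
        · simpa using hre
        · simpa using him
    rcases hpm with h | h
    · rw [h]
      simp
    · rw [h]
      have hns2 : Complex.normSq (w - 1) = 2 - 2 * w.re := by
        rw [Complex.normSq_sub]
        simp [hns, Complex.normSq_one]
        ring
      rw [Complex.div_re, hns2]
      have hpos : (0:ℝ) < 2 - 2 * w.re := by linarith
      have e1 : (-1 - 1 : ℂ).re = -2 := by norm_num
      have e2 : (-1 - 1 : ℂ).im = 0 := by norm_num
      rw [e1, e2]
      have e3 : (w - 1).re = w.re - 1 := by simp
      rw [e3]
      rw [zero_mul, zero_div, add_zero]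
      have : (-2 : ℝ) * (w.re - 1) = 2 - 2 * w.re := by ring
      rw [this, div_self (ne_of_gt hpos)]
      norm_num

lemma pow_sq_parity (ε : ℂ) (hε : ε = 1 ∨ ε = -1) (k : ℕ) : ε ^ (k ^ 2) = ε ^ k := by
  rcases hε with h | h
  · simp [h]
  · subst h
    rcases Nat.even_or_odd k with he | ho
    · have h2 : Even (k ^ 2) := (Nat.even_pow).mpr ⟨he, two_ne_zero⟩
      rw [he.neg_one_pow, h2.neg_one_pow]
    · have h2 : Odd (k ^ 2) := ho.pow
      rw [ho.neg_one_pow, h2.neg_one_pow]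

theorem key (q : ℕ) (hq : q ≠ 0) (a1 a2 : ℤ)
    (hgcd : Int.gcd a1 (Int.gcd a2 q) = 1) :
    Complex.normSq (∑ r ∈ range q, psi q (a2 * r ^ 2 + a1 * r)) ≤ 2 * q := by
  set d : ℕ := Int.gcd (2 * a2) q with hd
  have hd0 : d ≠ 0 := by
    intro h
    rw [hd] at h
    have := Int.gcd_eq_zero_iff.mp h
    exact hq (by exact_mod_cast this.2)
  have hdq : d ∣ q := by
    have : (d : ℤ) ∣ (q : ℤ) := Int.gcd_dvd_right _ _
    exact_mod_cast this
  set N : ℕ := q / d with hN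
  have hNd : N * d = q := Nat.div_mul_cancel hdq
  have hN0 : N ≠ 0 := by
    intro h
    rw [h, zero_mul] at hNd
    exact hq hNd.symm
  have hDdvd : (d : ℤ) ∣ 2 * a2 := Int.gcd_dvd_left _ _
  set m : ℤ := (2 * a2) / d with hm
  have hmd : m * d = 2 * a2 := Int.ediv_mul_cancel hDdvd
  have hd0' : (d : ℤ) ≠ 0 := by exact_mod_cast hd0
  have hN0' : (N : ℤ) ≠ 0 := by exact_mod_cast hN0
  have hNZ : ((q : ℤ) / d) = (N : ℤ) := by
    have : (q : ℤ) = (N : ℤ) * d := by exact_mod_cast hNd.symm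
    rw [this, Int.mul_ediv_cancel _ hd0']
  have hcop : Int.gcd m N = 1 := by
    have h := Int.gcd_div_gcd_div_gcd (i := 2 * a2) (j := q) (Nat.pos_of_ne_zero hd0)
    rwa [← hd, ← hm, hNZ] at h
  have hdvd_iff : ∀ r : ℤ, (q : ℤ) ∣ 2 * a2 * r ↔ (N : ℤ) ∣ r := by
    intro r
    have hqZ : (q : ℤ) = d * N := by exact_mod_cast (by rw [mul_comm] at hNd; exact hNd.symm)
    constructor
    · intro h
      rw [hqZ] at h
      have h2 : (d : ℤ) * N ∣ (d : ℤ) * (m * r) := by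
        rw [show (d:ℤ) * (m * r) = (m * d) * r by ring, hmd]
        exact h
      have h3 : (N : ℤ) ∣ m * r := (mul_dvd_mul_iff_left hd0').mp h2
      exact Int.dvd_of_dvd_mul_right_of_gcd_one h3 (by rwa [Int.gcd_comm])
    · rintro ⟨t, ht⟩
      rw [hqZ, ht, show 2 * a2 * ((N:ℤ) * t) = (d * N) * (m * t) by rw [← hmd]; ring]
      exact Dvd.intro _ rfl
  -- define epsilon and w
  set ε : ℂ := (-1 : ℂ) ^ (m * (N : ℤ)) with hε
  have hεpm : ε = 1 ∨ ε = -1 := by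
    rcases Int.even_or_odd (m * (N : ℤ)) with h | h
    · exact Or.inl (h.neg_one_zpow)
    · exact Or.inr (h.neg_one_zpow)
  set w : ℂ := ε * psi q (a1 * N) with hw
  -- term identification
  have hterm : ∀ k : ℕ, psi q (a2 * ((k * N : ℕ) : ℤ) ^ 2 + a1 * ((k * N : ℕ) : ℤ)) = w ^ k := by
    intro k
    have hsplit : (a2 * ((k * N : ℕ) : ℤ) ^ 2 + a1 * ((k * N : ℕ) : ℤ))
        = (a2 * ((k : ℤ) * N) ^ 2) + (a1 * N) * k := by push_cast; ring
    rw [hsplit, psi_add, psi_mul_nat]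
    have hfirst : psi q (a2 * ((k : ℤ) * N) ^ 2) = ε ^ k := by
      have hint : 2 * (a2 * ((k : ℤ) * N) ^ 2) = (m * N * k ^ 2) * q := by
        have hqZ : (q : ℤ) = (N : ℤ) * d := by exact_mod_cast hNd.symm
        rw [hqZ]
        calc 2 * (a2 * ((k : ℤ) * N) ^ 2) = (m * d) * (N:ℤ)^2 * (k:ℤ)^2 := by rw [hmd]; ring
        _ = m * N * (k:ℤ) ^ 2 * ((N:ℤ) * d) := by ring
      have hq' : (q : ℂ) ≠ 0 := Nat.cast_ne_zero.mpr hq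
      have hdiv : ((a2 * ((k : ℤ) * N) ^ 2 : ℤ) : ℂ) / q = ((m * N * k ^ 2 : ℤ) : ℂ) / 2 := by
        rw [div_eq_div_iff hq' (by norm_num)]
        have := congrArg (fun z : ℤ => (z : ℂ)) hint
        push_cast at this ⊢
        linear_combination this
      rw [psi, hdiv]
      have harg : 2 * (Real.pi : ℂ) * Complex.I * (((m * N * k ^ 2 : ℤ) : ℂ) / 2)
          = ((m * N * k ^ 2 : ℤ) : ℂ) * (Real.pi * Complex.I) := by
        push_cast; ring
      rw [harg, Complex.exp_int_mul, Complex.exp_pi_mul_I]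
      have : (m * (N : ℤ) * (k : ℤ) ^ 2) = (m * N) * ((k ^ 2 : ℕ) : ℤ) := by push_cast; ring
      rw [show (m * ↑N * (k:ℤ) ^ 2) = (m * ↑N) * ((k ^ 2 : ℕ) : ℤ) by push_cast; ring,
        zpow_mul, zpow_natCast]
      exact pow_sq_parity ε hεpm k
    rw [hfirst, hw, mul_pow]
  -- reindex the sum
  have hreindex : ∑ r ∈ range q, psi q (a2 * r ^ 2 + a1 * r) *
        (if (q : ℤ) ∣ 2 * a2 * r then (q : ℂ) else 0)
      = (q : ℂ) * ∑ k ∈ range d, w ^ k := by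
    have hcond : ∀ r : ℕ, ((q : ℤ) ∣ 2 * a2 * r) ↔ N ∣ r := by
      intro r
      rw [hdvd_iff r]
      exact Int.natCast_dvd_natCast
    calc ∑ r ∈ range q, psi q (a2 * r ^ 2 + a1 * r) *
          (if (q : ℤ) ∣ 2 * a2 * r then (q : ℂ) else 0)
        = ∑ r ∈ range q, (if N ∣ r then psi q (a2 * r ^ 2 + a1 * r) * q else 0) := by
          apply Finset.sum_congr rfl
          intro r _
          rw [mul_ite, mul_zero]
          congr 1
          simp only [eq_iff_iff]
          exact hcond r
      _ = ∑ r ∈ (range q).filter (fun r => N ∣ r), psi q (a2 * r ^ 2 + a1 * r) * q := by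
          rw [Finset.sum_filter]
      _ = ∑ k ∈ range d, psi q (a2 * ((k * N : ℕ) : ℤ) ^ 2 + a1 * ((k * N : ℕ) : ℤ)) * q := by
          have hfilter : (range q).filter (fun r => N ∣ r) = (range d).image (fun k => k * N) := by
            ext r
            simp only [mem_filter, mem_range, mem_image]
            constructor
            · rintro ⟨hr, t, ht⟩
              subst ht
              refine ⟨t, ?_, mul_comm t N⟩
              rw [← hNd, mul_comm N d] at hr
              rw [mul_comm N t] at hr
              exact Nat.lt_of_mul_lt_mul_right hr
            · rintro ⟨k, hk, hkr⟩
              subst hkr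
              constructor
              · rw [← hNd, mul_comm N d]
                exact Nat.mul_lt_mul_of_lt_of_le hk (le_refl N) (Nat.pos_of_ne_zero hN0)
              · exact Dvd.intro_left k rfl
          rw [hfilter, Finset.sum_image]
          intro k₁ _ k₂ _ h
          exact Nat.eq_of_mul_eq_mul_right (Nat.pos_of_ne_zero hN0) h
      _ = (q : ℂ) * ∑ k ∈ range d, w ^ k := by
          rw [Finset.mul_sum]
          apply Finset.sum_congr rfl
          intro k _
          rw [hterm k, mul_comm]
  -- the case w = 1
  have hw1 : w = 1 → d ≤ 2 := by
    intro h
    have h2 : w * w = 1 := by rw [h]; norm_num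
    have hε2 : ε * ε = 1 := by
      rcases hεpm with h' | h' <;> rw [h'] <;> norm_num
    have hpsi2 : psi q (2 * a1 * N) = 1 := by
      have : psi q (a1 * N) * psi q (a1 * N) = 1 := by
        have expand : w * w = (ε * ε) * (psi q (a1 * N) * psi q (a1 * N)) := by rw [hw]; ring
        rw [expand, hε2, one_mul] at h2
        exact h2
      rw [show (2 * a1 * (N:ℤ)) = a1 * N + a1 * N by ring, psi_add]
      exact this
    have hdvd : (q : ℤ) ∣ 2 * a1 * N := (psi_eq_one_iff q hq _).mp hpsi2
    have hdvd2 : (d : ℤ) ∣ 2 * a1 := by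
      have hqZ : (q : ℤ) = d * N := by exact_mod_cast (by rw [mul_comm] at hNd; exact hNd.symm)
      rw [hqZ] at hdvd
      have : (d : ℤ) * N ∣ (2 * a1) * N := by rwa [show (2*a1)*(N:ℤ) = 2*a1*N by ring]
      exact (mul_dvd_mul_iff_right hN0').mp this
    have hdvd3 : (d : ℤ) ∣ 2 * q := Dvd.dvd.mul_left (by exact_mod_cast hdq) 2
    have hgcd2 : Int.gcd (2 * a1) (Int.gcd (2 * a2) (2 * q)) = 2 := by
      rw [Int.gcd_mul_left 2 a2 q]
      have : (((2:ℤ).natAbs * Int.gcd a2 q : ℕ) : ℤ) = 2 * (Int.gcd a2 q : ℤ) := by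
        push_cast; norm_num
      rw [show ((2:ℤ).natAbs * Int.gcd a2 q : ℕ) = ((2 * Int.gcd a2 q : ℕ)) by norm_num]
      rw [show ((2 * Int.gcd a2 q : ℕ) : ℤ) = 2 * ((Int.gcd a2 q : ℕ) : ℤ) by push_cast; ring]
      rw [Int.gcd_mul_left 2 a1 (Int.gcd a2 q)]
      rw [hgcd]
      norm_num
    have hdvdgcd : (d : ℤ) ∣ (Int.gcd (2 * a1) (Int.gcd (2 * a2) (2 * q)) : ℤ) := by
      apply Int.dvd_coe_gcd hdvd2
      apply Int.dvd_coe_gcd hDdvd hdvd3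
    rw [hgcd2] at hdvdgcd
    have : d ∣ 2 := by exact_mod_cast hdvdgcd
    exact Nat.le_of_dvd (by norm_num) this
  -- w^d = ±1
  have hwd : w ^ d = 1 ∨ w ^ d = -1 := by
    have hpsid : psi q (a1 * N) ^ d = 1 := by
      rw [← psi_mul_nat]
      have : a1 * (N : ℤ) * d = (q : ℤ) * a1 := by
        have : ((N : ℤ)) * d = q := by exact_mod_cast hNd
        rw [mul_assoc, this]; ring
      rw [this, psi_q_mul q hq]
    have : w ^ d = ε ^ d := by rw [hw, mul_pow, hpsid, mul_one]
    rw [this]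
    rcases hεpm with h | h
    · left; rw [h, one_pow]
    · rw [h]
      rcases Nat.even_or_odd d with he | ho
      · left; exact he.neg_one_pow
      · right; exact ho.neg_one_pow
  -- |w| = 1
  have hwabs : ‖w‖ = 1 := by
    rw [hw, norm_mul, abs_psi]
    rcases hεpm with h | h <;> rw [h] <;> simp
  -- conclude
  have hre := lemA w d hwabs hwd hw1
  have hmain := normSq_V q hq a1 a2
  rw [hreindex] at hmain
  have hre2 : Complex.normSq (∑ r ∈ range q, psi q (a2 * r ^ 2 + a1 * r))
      = (q : ℝ) * (∑ k ∈ range d, w ^ k).re := by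
    have := congrArg Complex.re hmain
    rwa [Complex.ofReal_re, show ((q:ℂ) * ∑ k ∈ range d, w ^ k).re
      = (q : ℝ) * (∑ k ∈ range d, w ^ k).re by simp [Complex.mul_re]] at this
  rw [hre2]
  have hq0 : (0:ℝ) ≤ (q:ℝ) := Nat.cast_nonneg q
  calc (q : ℝ) * (∑ k ∈ range d, w ^ k).re ≤ (q:ℝ) * 2 := by
        exact mul_le_mul_of_nonneg_left hre hq0
    _ = 2 * q := by ring

theorem stmt_7 :
    ∃ C : ℝ, 0 < C ∧ ∀ (q : ℕ) (a1 a2 : ℤ), 1 ≤ q →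
      Int.gcd a1 (Int.gcd a2 q) = 1 →
      ‖(∑ r ∈ Finset.Icc 1 q,
          Complex.exp (2 * Real.pi * Complex.I *
            (((a2 * r ^ 2 + a1 * r : ℤ) : ℝ) / q)))‖ ≤ C * Real.sqrt q := by
  refine ⟨2, by norm_num, ?_⟩
  intro q a1 a2 hq1 hgcd
  have hq : q ≠ 0 := by omega
  set P : ℤ → ℤ := fun x => a2 * x ^ 2 + a1 * x with hP
  have hstep1 : ∑ r ∈ Finset.Icc 1 q,
      Complex.exp (2 * Real.pi * Complex.I * (((a2 * r ^ 2 + a1 * r : ℤ) : ℝ) / q))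
      = ∑ r ∈ Finset.Icc 1 q, psi q (P r) := by
    apply Finset.sum_congr rfl
    intro r _
    rw [psi, hP]
    norm_cast
  have hper : ∀ x : ℤ, psi q (P (x + q)) = psi q (P x) := by
    intro x
    have : P (x + q) = P x + (q : ℤ) * (2 * a2 * x + a2 * q + a1) := by simp only [hP]; ring
    rw [this, psi_add, psi_q_mul q hq, mul_one]
  have hstep2 : ∑ r ∈ Finset.Icc 1 q, psi q (P r) = ∑ r ∈ range q, psi q (P r) := by
    rw [show Finset.Icc 1 q = Finset.Ico 1 (q + 1) by rw [Finset.Ico_add_one_right_eq_Icc],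
      Finset.sum_Ico_eq_sum_range]
    simp only [Nat.add_sub_cancel]
    have : ∀ i ∈ range q, psi q (P ((1 + i : ℕ) : ℤ)) = psi q (P ((i : ℤ) + 1)) := by
      intro i _
      congr 1
      push_cast
      ring
    rw [Finset.sum_congr rfl this]
    exact shift_one q (fun x => psi q (P x)) hper
  rw [hstep1, hstep2]
  have hkey := key q hq a1 a2 hgcd
  have habs : ‖∑ r ∈ range q, psi q (P r)‖
      = Real.sqrt (Complex.normSq (∑ r ∈ range q, psi q (P r))) := Complex.norm_def _
  rw [habs]
  calc Real.sqrt (Complex.normSq (∑ r ∈ range q, psi q (P r)))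
      ≤ Real.sqrt (2 * q) := Real.sqrt_le_sqrt hkey
    _ = Real.sqrt 2 * Real.sqrt q := Real.sqrt_mul (by norm_num) _
    _ ≤ 2 * Real.sqrt q := by
        apply mul_le_mul_of_nonneg_right _ (Real.sqrt_nonneg _)
        have h4 : Real.sqrt 2 ≤ Real.sqrt 4 := Real.sqrt_le_sqrt (by norm_num)
        have h5 : Real.sqrt 4 = 2 := by
          rw [show (4:ℝ) = 2^2 by norm_num, Real.sqrt_sq (by norm_num : (0:ℝ) ≤ 2)]
        linarith
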